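/- Let r > 0, c₂ > 0 with c₂·r < 1, and let φ : [0,∞) → [0,∞) be continuous with φ(t) ≤ c₂·∫_{t−r}^{t} φ(s) ds for all t ≥ r. Set c₁ = max_{0≤t≤r} φ(t). Then for every ρ ∈ (0,1] and every t ≥ 0, φ(t) ≤ (c₁/(c₂·r)^ρ)·exp((ρ·ln(c₂·r)/r)·t). -/
import Mathlib

open Real Set

theorem stmt_4 (r c₁ c₂ : ℝ) (hr : 0 < r) (hc₂ : 0 < c₂) (hc₂r : c₂ * r < 1)
    (φ : ℝ → ℝ) (hcont : ContinuousOn φ (Set.Ici 0)) (hpos : ∀ t ≥ (0:ℝ), 0 ≤ φ t)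
    (hineq : ∀ t ≥ r, φ t ≤ c₂ * ∫ s in (t - r)..t, φ s)
    (hc₁ : IsGreatest (φ '' Set.Icc 0 r) c₁) :
    ∀ ρ : ℝ, 0 < ρ → ρ ≤ 1 → ∀ t ≥ (0:ℝ),
      φ t ≤ c₁ / (c₂ * r) ^ ρ * Real.exp (ρ * Real.log (c₂ * r) / r * t) := by
  set q := c₂ * r with hq
  have hq0 : 0 < q := mul_pos hc₂ hr
  have hc₁0 : 0 ≤ c₁ := by
    obtain ⟨x, hx, hxe⟩ := hc₁.1
    exact hxe ▸ hpos x hx.1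
  -- integrability on subintervals of [0,∞)
  have hint : ∀ t : ℝ, r ≤ t → IntervalIntegrable φ MeasureTheory.volume (t - r) t := by
    intro t ht
    apply ContinuousOn.intervalIntegrable
    apply hcont.mono
    rw [Set.uIcc_of_le (by linarith)]
    intro s hs
    exact le_trans (by linarith) hs.1
  -- bound on [0, (n+1) r] by c₁
  have bdd : ∀ n : ℕ, ∀ t, 0 ≤ t → t ≤ (n + 1) * r → φ t ≤ c₁ := by
    intro n
    induction n with
    | zero =>
      intro t ht0 ht1
      push_cast at ht1
      exact hc₁.2 ⟨t, ⟨ht0, by linarith⟩, rfl⟩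
    | succ n ih =>
      intro t ht0 ht1
      have hcomp : IsCompact (Set.Icc (0:ℝ) ((n + 2) * r)) := isCompact_Icc
      have hne : (Set.Icc (0:ℝ) ((n + 2) * r)).Nonempty := ⟨0, le_refl _, by positivity⟩
      obtain ⟨x, hxI, hxmax⟩ := hcomp.exists_isMaxOn hne
        (hcont.mono (fun s hs => hs.1))
      have hmax : ∀ s ∈ Set.Icc (0:ℝ) ((n + 2) * r), φ s ≤ φ x := hxmax
      have hxc₁ : φ x ≤ c₁ := by
        by_contra hcon
        push_neg at hcon
        have hx1 : (n + 1) * r < x := by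
          by_contra hxle
          push_neg at hxle
          exact absurd (ih x hxI.1 hxle) (not_le.mpr hcon)
        have hxr : r ≤ x := by nlinarith [Nat.cast_nonneg (α := ℝ) n]
        have key := hineq x hxr
        have hmono : (∫ s in (x - r)..x, φ s) ≤ ∫ s in (x - r)..x, φ x := by
          apply intervalIntegral.integral_mono_on (by linarith) (hint x hxr)
            intervalIntegrable_const
          intro s hs
          apply hmax s ⟨by linarith [hs.1], le_trans hs.2 hxI.2⟩
        rw [intervalIntegral.integral_const] at hmono
        have hφx0 : 0 < φ x := lt_of_le_of_lt hc₁0 hcon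
        have : φ x ≤ q * φ x := by
          calc φ x ≤ c₂ * ∫ s in (x - r)..x, φ s := key
            _ ≤ c₂ * ((x - (x - r)) • φ x) := by
                exact mul_le_mul_of_nonneg_left hmono hc₂.le
            _ = q * φ x := by simp [hq]; ring
        nlinarith
      have htI : t ∈ Set.Icc (0:ℝ) ((n + 2) * r) := ⟨ht0, by push_cast at ht1 ⊢; linarith⟩
      exact le_trans (hmax t htI) hxc₁
  have hb : ∀ t, 0 ≤ t → φ t ≤ c₁ := by
    intro t ht
    obtain ⟨n, hn⟩ := exists_nat_ge (t / r)
    refine bdd n t ht ?_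
    have : t ≤ n * r := by
      rw [div_le_iff₀ hr] at hn; linarith
    nlinarith [Nat.cast_nonneg (α := ℝ) n]
  -- geometric decay
  have geo : ∀ n : ℕ, ∀ t, (n : ℝ) * r ≤ t → φ t ≤ c₁ * q ^ n := by
    intro n
    induction n with
    | zero => intro t ht; simpa using hb t (by simpa using ht)
    | succ n ih =>
      intro t ht
      have hnr : (0:ℝ) ≤ (n:ℝ) * r := by positivity
      have htr : r ≤ t := by push_cast at ht; nlinarith [Nat.cast_nonneg (α := ℝ) n]
      have key := hineq t htr
      have hmono : (∫ s in (t - r)..t, φ s) ≤ ∫ s in (t - r)..t, c₁ * q ^ n := by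
        apply intervalIntegral.integral_mono_on (by linarith) (hint t htr)
          intervalIntegrable_const
        intro s hs
        apply ih s
        push_cast at ht
        linarith [hs.1]
      rw [intervalIntegral.integral_const] at hmono
      calc φ t ≤ c₂ * ∫ s in (t - r)..t, φ s := key
        _ ≤ c₂ * ((t - (t - r)) • (c₁ * q ^ n)) := mul_le_mul_of_nonneg_left hmono hc₂.le
        _ = c₁ * q ^ (n + 1) := by simp [hq]; ring
  -- conclusion
  intro ρ hρ0 hρ1 t ht
  set n := Nat.floor (t / r) with hn
  have htn : (n : ℝ) * r ≤ t := by
    have := Nat.floor_le (by positivity : (0:ℝ) ≤ t / r)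
    rw [← hn] at this
    calc (n:ℝ) * r ≤ (t / r) * r := by nlinarith
      _ = t := by field_simp
  have htn' : t / r < n + 1 := Nat.lt_floor_add_one _
  have h1 := geo n t htn
  have hrhs : c₁ / q ^ ρ * Real.exp (ρ * Real.log q / r * t)
      = c₁ * q ^ (ρ * (t / r) - ρ) := by
    rw [Real.rpow_sub hq0, Real.rpow_def_of_pos hq0 (ρ * (t / r))]
    rw [div_mul_eq_mul_div, mul_comm (Real.log q)]
    ring_nf
  rw [hrhs]
  have hexp : ρ * (t / r) - ρ ≤ (n : ℝ) := by
    rcases le_or_gt (t / r) 1 with h | h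
    · nlinarith [Nat.cast_nonneg (α := ℝ) n]
    · nlinarith
  have hpow : q ^ (n:ℝ) ≤ q ^ (ρ * (t / r) - ρ) :=
    Real.rpow_le_rpow_of_exponent_ge hq0 hc₂r.le hexp
  rw [← Real.rpow_natCast q n] at h1
  exact le_trans h1 (mul_le_mul_of_nonneg_left hpow hc₁0)
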